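/- Let n ≥ 2 be an integer, 0 < σ < s < 1, M > 0, K > 0, c > 0 and p ∈ [0,1), and set q := σ(n−2s)/(n−2σ). Let Φ : ℝ^n_+ → [0,∞) be measurable with Φ(y) ≤ M (1 + |y|)^{2s−n} and Φ(y) ≤ K y_n^p for a.e. y ∈ ℝ^n_+, and define 𝒲(y,z) := c ∫_{ℝ^n_+} G_s((y,z),ξ) |ξ|^{(σ−s)2*_σ} Φ(ξ)^{2*_σ−1} dξ. Then there exists C = C(n,s,σ,M,K,c) such that 𝒲(y,z) ≤ C y_n^{min(p+q, 1)} for all y ∈ ℝ^n_+ and z ≥ 0 with |y|² + z² ≤ 1. -/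

import Mathlib

open MeasureTheory Real Set ENNReal

/-- The last coordinate `y_n` of a point `y ∈ ℝ^n`. -/
noncomputable def lastCoord {n : ℕ} (y : EuclideanSpace ℝ (Fin n)) : ℝ :=
  if h : 0 < n then y ⟨n - 1, Nat.sub_lt h one_pos⟩ else 0

/-- The open half-space `ℝ^n_+`. -/
def halfSpace (n : ℕ) : Set (EuclideanSpace ℝ (Fin n)) := {y | 0 < lastCoord y}

/-- The kernel `G_s((y,z),ξ)`. -/
noncomputable def GKer (n : ℕ) (s : ℝ) (y : EuclideanSpace ℝ (Fin n)) (z : ℝ)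
    (ξ : EuclideanSpace ℝ (Fin n)) : ℝ :=
  (‖y - ξ‖ ^ 2 + z ^ 2) ^ (-((n : ℝ) - 2 * s) / 2) *
    (1 - (1 + 4 * lastCoord y * lastCoord ξ / (‖y - ξ‖ ^ 2 + z ^ 2)) ^ ((2 * s - (n : ℝ)) / 2))

/-- `𝒲(y,z) := c ∫_{ℝ^n_+} G_s((y,z),ξ) |ξ|^{(σ−s)2*_σ} Φ(ξ)^{2*_σ−1} dξ`. -/
noncomputable def WGreen (n : ℕ) (s σ c : ℝ) (Φ : EuclideanSpace ℝ (Fin n) → ℝ)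
    (y : EuclideanSpace ℝ (Fin n)) (z : ℝ) : ℝ :=
  c * ∫ ξ in halfSpace n,
    GKer n s y z ξ * ‖ξ‖ ^ ((σ - s) * (2 * n / (n - 2 * σ))) *
      Φ ξ ^ (2 * n / (n - 2 * σ) - 1)

section helpers
variable {n : ℕ}

lemma lastCoord_eq (hn : 0 < n) (y : EuclideanSpace ℝ (Fin n)) :
    lastCoord y = y ⟨n - 1, Nat.sub_lt hn one_pos⟩ := dif_pos hn

lemma lastCoord_sub (hn : 0 < n) (x y : EuclideanSpace ℝ (Fin n)) :
    lastCoord (x - y) = lastCoord x - lastCoord y := by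
  simp [lastCoord_eq hn]

lemma abs_lastCoord_le_norm (hn : 0 < n) (x : EuclideanSpace ℝ (Fin n)) :
    |lastCoord x| ≤ ‖x‖ := by
  rw [lastCoord_eq hn, EuclideanSpace.norm_eq]
  rw [← Real.sqrt_sq_eq_abs]
  apply Real.sqrt_le_sqrt
  have : ∀ i, (0:ℝ) ≤ ‖x i‖ ^ 2 := fun i => sq_nonneg _
  calc (x ⟨n-1, Nat.sub_lt hn one_pos⟩)^2 = ‖x ⟨n-1, Nat.sub_lt hn one_pos⟩‖^2 := by
        rw [Real.norm_eq_abs, sq_abs]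
    _ ≤ ∑ i, ‖x i‖ ^ 2 := Finset.single_le_sum (fun i _ => this i) (Finset.mem_univ _)

lemma measurable_lastCoord : Measurable (lastCoord (n := n)) := by
  unfold lastCoord
  split
  · fun_prop
  · exact measurable_const

lemma measurableSet_halfSpace : MeasurableSet (halfSpace n) :=
  measurableSet_lt measurable_const measurable_lastCoord

lemma one_sub_rpow_le_mul {a t : ℝ} (ha : 0 ≤ a) (ht : 0 ≤ t) :
    1 - (1 + t) ^ (-a) ≤ a * t := by
  have h1 : (0:ℝ) < 1 + t := by linarith
  have hlog : Real.log (1 + t) ≤ t := by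
    have := Real.log_le_sub_one_of_pos h1
    linarith
  have : (1:ℝ) - a * t ≤ (1 + t) ^ (-a) := by
    rw [Real.rpow_def_of_pos h1]
    have h2 : 1 + (-(a * Real.log (1 + t))) ≤ Real.exp (-(a * Real.log (1 + t))) := by
      have := Real.add_one_le_exp (-(a * Real.log (1 + t))); linarith
    have h3 : -(a * t) ≤ -(a * Real.log (1 + t)) := by nlinarith
    calc (1:ℝ) - a * t = 1 + (-(a*t)) := by ring
      _ ≤ 1 + (-(a * Real.log (1+t))) := by linarith
      _ ≤ Real.exp (-(a * Real.log (1+t))) := h2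
      _ = Real.exp (Real.log (1+t) * -a) := by ring_nf
  linarith

lemma one_sub_rpow_le_one {a t : ℝ} (ht : 0 ≤ t) :
    1 - (1 + t) ^ (-a) ≤ 1 := by
  have : (0:ℝ) ≤ (1+t) ^ (-a) := Real.rpow_nonneg (by linarith) _
  linarith

lemma min_one_le_rpow {T θ : ℝ} (hT : 0 ≤ T) (hθ0 : 0 ≤ θ) (hθ1 : θ ≤ 1) :
    min 1 T ≤ T ^ θ := by
  rcases le_or_gt T 1 with h | h
  · rcases eq_or_lt_of_le hT with h0 | h0
    · simp [← h0]
      positivity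
    · calc min 1 T ≤ T := min_le_right _ _
        _ = T ^ (1:ℝ) := (Real.rpow_one T).symm
        _ ≤ T ^ θ := Real.rpow_le_rpow_of_exponent_ge h0 h hθ1
  · calc min 1 T ≤ 1 := min_le_left _ _
      _ ≤ T ^ θ := Real.one_le_rpow h.le hθ0

end helpers

section ballint
variable {n : ℕ}

lemma integrableOn_ball_rpow_neg (hn : 0 < n) {β : ℝ} (hβ0 : 0 < β) (hβ : β < n) (ρ : ℝ) :
    IntegrableOn (fun x : EuclideanSpace ℝ (Fin n) => ‖x‖ ^ (-β)) (Metric.ball 0 ρ) := by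
  have hmeas : Measurable fun x : EuclideanSpace ℝ (Fin n) => ‖x‖ ^ (-β) := by fun_prop
  have hnn : ∀ x : EuclideanSpace ℝ (Fin n), 0 ≤ ‖x‖ ^ (-β) :=
    fun x => Real.rpow_nonneg (norm_nonneg x) _
  refine ⟨hmeas.aestronglyMeasurable, ?_⟩
  rw [hasFiniteIntegral_iff_ofReal (ae_of_all _ hnn)]
  set μ := volume.restrict (Metric.ball (0 : EuclideanSpace ℝ (Fin n)) ρ) with hμ
  rw [lintegral_eq_lintegral_meas_le μ (ae_of_all _ hnn) hmeas.aemeasurable]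
  have hsplit : ∫⁻ t in Ioi (0:ℝ), μ {a | t ≤ ‖a‖ ^ (-β)} ≤
      (∫⁻ t in Ioc (0:ℝ) 1, μ {a | t ≤ ‖a‖ ^ (-β)}) + ∫⁻ t in Ioi (1:ℝ), μ {a | t ≤ ‖a‖ ^ (-β)} :=
    le_trans (lintegral_mono_set Ioi_subset_Ioc_union_Ioi) (lintegral_union_le _ _ _)
  refine lt_of_le_of_lt hsplit (ENNReal.add_lt_top.2 ⟨?_, ?_⟩)
  · calc (∫⁻ t in Ioc (0:ℝ) 1, μ {a | t ≤ ‖a‖ ^ (-β)})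
        ≤ ∫⁻ _ in Ioc (0:ℝ) 1, μ univ := by
          refine lintegral_mono fun t => measure_mono (subset_univ _)
      _ < ⊤ := by
          rw [setLIntegral_const]
          refine ENNReal.mul_lt_top ?_ (by simp [Real.volume_Ioc])
          rw [hμ, Measure.restrict_apply_univ]
          exact measure_ball_lt_top
  · have hbound : ∀ t ∈ Ioi (1:ℝ), μ {a | t ≤ ‖a‖ ^ (-β)} ≤
        ENNReal.ofReal (t ^ (-((n:ℝ)/β))) * volume (Metric.ball (0 : EuclideanSpace ℝ (Fin n)) 1) := by
      intro t ht
      have ht0 : (0:ℝ) < t := lt_trans one_pos ht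
      have hr0 : (0:ℝ) ≤ t ^ (-β⁻¹) := Real.rpow_nonneg ht0.le _
      have hsub : {a : EuclideanSpace ℝ (Fin n) | t ≤ ‖a‖ ^ (-β)} ⊆
          Metric.closedBall 0 (t ^ (-β⁻¹)) := by
        intro a ha
        simp only [mem_setOf_eq] at ha
        have ha0 : (0:ℝ) < ‖a‖ := by
          rcases eq_or_lt_of_le (norm_nonneg a) with h0 | h0
          · exfalso
            rw [← h0, Real.zero_rpow (neg_ne_zero.2 hβ0.ne')] at ha
            linarith
          · exact h0
        rw [Metric.mem_closedBall, dist_zero_right]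
        have h4 := Real.rpow_le_rpow_of_nonpos ht0 ha (neg_nonpos.2 (inv_nonneg.2 hβ0.le))
        rw [← Real.rpow_mul ha0.le] at h4
        have h5 : -β * -β⁻¹ = 1 := by field_simp
        rwa [h5, Real.rpow_one] at h4
      calc μ {a : EuclideanSpace ℝ (Fin n) | t ≤ ‖a‖ ^ (-β)}
          ≤ volume {a : EuclideanSpace ℝ (Fin n) | t ≤ ‖a‖ ^ (-β)} :=
            Measure.restrict_apply_le _ _
        _ ≤ volume (Metric.closedBall 0 (t ^ (-β⁻¹))) := measure_mono hsub
        _ = ENNReal.ofReal ((t ^ (-β⁻¹)) ^ (Module.finrank ℝ (EuclideanSpace ℝ (Fin n)))) *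
              volume (Metric.ball (0 : EuclideanSpace ℝ (Fin n)) 1) :=
            Measure.addHaar_closedBall _ _ hr0
        _ = ENNReal.ofReal (t ^ (-((n:ℝ)/β))) *
              volume (Metric.ball (0 : EuclideanSpace ℝ (Fin n)) 1) := by
            have hre : (t ^ (-β⁻¹)) ^ (Module.finrank ℝ (EuclideanSpace ℝ (Fin n)))
                = t ^ (-((n:ℝ)/β)) := by
              rw [finrank_euclideanSpace_fin, ← Real.rpow_natCast (t ^ (-β⁻¹)) n,
                ← Real.rpow_mul ht0.le]
              congr 1
              field_simp
            rw [hre]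
    calc ∫⁻ t in Ioi (1:ℝ), μ {a | t ≤ ‖a‖ ^ (-β)}
        ≤ ∫⁻ t in Ioi (1:ℝ), ENNReal.ofReal (t ^ (-((n:ℝ)/β))) *
            volume (Metric.ball (0 : EuclideanSpace ℝ (Fin n)) 1) := by
          refine setLIntegral_mono' measurableSet_Ioi hbound
      _ = (∫⁻ t in Ioi (1:ℝ), ENNReal.ofReal (t ^ (-((n:ℝ)/β)))) *
            volume (Metric.ball (0 : EuclideanSpace ℝ (Fin n)) 1) := by
          rw [lintegral_mul_const' _ _ measure_ball_lt_top.ne]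
      _ < ⊤ := by
          refine ENNReal.mul_lt_top ?_ measure_ball_lt_top
          refine IntegrableOn.setLIntegral_lt_top ?_
          exact integrableOn_Ioi_rpow_of_lt (by rw [neg_lt_neg_iff]; exact (one_lt_div hβ0).2 hβ) one_pos

end ballint

section translate
variable {n : ℕ}

lemma translate_mp (y : EuclideanSpace ℝ (Fin n)) :
    MeasurePreserving (fun x : EuclideanSpace ℝ (Fin n) => x + y) volume volume :=
  measurePreserving_add_right volume y

lemma translate_preimage_ball (y : EuclideanSpace ℝ (Fin n)) (ρ : ℝ) :
    (fun x : EuclideanSpace ℝ (Fin n) => x + y) ⁻¹' (Metric.ball y ρ) = Metric.ball 0 ρ := by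
  ext x
  simp [Metric.mem_ball, dist_eq_norm]

lemma integrableOn_sub_rpow_neg (hn : 0 < n) {β : ℝ} (hβ0 : 0 < β) (hβ : β < n) (ρ : ℝ)
    (y : EuclideanSpace ℝ (Fin n)) :
    IntegrableOn (fun ξ : EuclideanSpace ℝ (Fin n) => ‖ξ - y‖ ^ (-β)) (Metric.ball y ρ) := by
  have hemb : MeasurableEmbedding (fun x : EuclideanSpace ℝ (Fin n) => x + y) :=
    (MeasurableEquiv.addRight y).measurableEmbedding
  have h := ((translate_mp y).restrict_preimage_emb hemb
    (Metric.ball y ρ)).integrable_comp_emb hemb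
    (g := fun ξ : EuclideanSpace ℝ (Fin n) => ‖ξ - y‖ ^ (-β))
  rw [IntegrableOn, ← h]
  have : ((fun ξ : EuclideanSpace ℝ (Fin n) => ‖ξ - y‖ ^ (-β)) ∘ (fun x => x + y))
      = fun x : EuclideanSpace ℝ (Fin n) => ‖x‖ ^ (-β) := by
    funext x; simp
  rw [translate_preimage_ball, this]
  exact integrableOn_ball_rpow_neg hn hβ0 hβ ρ

lemma setIntegral_sub_rpow_neg (hn : 0 < n) {β : ℝ} (ρ : ℝ) (y : EuclideanSpace ℝ (Fin n)) :
    ∫ ξ in Metric.ball y ρ, ‖ξ - y‖ ^ (-β) =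
      ∫ x in Metric.ball (0 : EuclideanSpace ℝ (Fin n)) ρ, ‖x‖ ^ (-β) := by
  have hemb : MeasurableEmbedding (fun x : EuclideanSpace ℝ (Fin n) => x + y) :=
    (MeasurableEquiv.addRight y).measurableEmbedding
  have h := (translate_mp y).setIntegral_preimage_emb hemb
    (fun ξ : EuclideanSpace ℝ (Fin n) => ‖ξ - y‖ ^ (-β)) (Metric.ball y ρ)
  rw [← h, translate_preimage_ball]
  congr 1
  funext x
  simp

end translate

section gker
variable {n : ℕ} {s : ℝ} {y ξ : EuclideanSpace ℝ (Fin n)} {z : ℝ}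

lemma GKer_nonneg (hns : 2 * s < (n : ℝ)) (hy : 0 ≤ lastCoord y) (hξ : 0 ≤ lastCoord ξ) :
    0 ≤ GKer n s y z ξ := by
  unfold GKer
  set R2 := ‖y - ξ‖ ^ 2 + z ^ 2 with hR2
  have hR2nn : 0 ≤ R2 := by positivity
  apply mul_nonneg (Real.rpow_nonneg hR2nn _)
  rcases eq_or_lt_of_le hR2nn with h0 | h0
  · rw [← h0] at *
    simp
  · have ht : 0 ≤ 4 * lastCoord y * lastCoord ξ / R2 := by positivity
    have : (1 + 4 * lastCoord y * lastCoord ξ / R2) ^ ((2 * s - (n:ℝ)) / 2) ≤ 1 := by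
      apply Real.rpow_le_one_of_one_le_of_nonpos (by linarith) (by linarith)
    linarith

lemma GKer_le_pow (hns : 2 * s < (n : ℝ)) (hy : 0 < lastCoord y) (hξ : 0 < lastCoord ξ)
    (hR2 : 0 < ‖y - ξ‖ ^ 2 + z ^ 2) {θ : ℝ} (hθ0 : 0 ≤ θ) (hθ1 : θ ≤ 1) :
    GKer n s y z ξ ≤ (2 * ((n:ℝ) - 2 * s) * lastCoord y * lastCoord ξ) ^ θ *
      (‖y - ξ‖ ^ 2 + z ^ 2) ^ (-((n : ℝ) - 2 * s) / 2 - θ) := by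
  unfold GKer
  set R2 := ‖y - ξ‖ ^ 2 + z ^ 2 with hR2def
  set t := 4 * lastCoord y * lastCoord ξ / R2 with htdef
  have ht : 0 ≤ t := by positivity
  have haa : (0:ℝ) ≤ ((n:ℝ) - 2 * s) / 2 := by linarith
  have h1 : (1 + t) ^ ((2 * s - (n:ℝ)) / 2) = (1 + t) ^ (-(((n:ℝ) - 2 * s) / 2)) := by
    congr 1; ring
  have h2 : 1 - (1 + t) ^ ((2 * s - (n:ℝ)) / 2) ≤ min 1 (((n:ℝ) - 2 * s) / 2 * t) := by
    rw [h1]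
    exact le_min (one_sub_rpow_le_one ht) (one_sub_rpow_le_mul haa ht)
  have h3 : min 1 (((n:ℝ) - 2 * s) / 2 * t) ≤ (((n:ℝ) - 2 * s) / 2 * t) ^ θ :=
    min_one_le_rpow (by positivity) hθ0 hθ1
  have h4 : ((n:ℝ) - 2 * s) / 2 * t = (2 * ((n:ℝ) - 2 * s) * lastCoord y * lastCoord ξ) * R2⁻¹ := by
    rw [htdef]; field_simp; ring
  have h5 : (((n:ℝ) - 2 * s) / 2 * t) ^ θ ≤
      (2 * ((n:ℝ) - 2 * s) * lastCoord y * lastCoord ξ) ^ θ * R2 ^ (-θ) := by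
    rw [h4, Real.mul_rpow (mul_nonneg (mul_nonneg (by linarith) hy.le) hξ.le)
      (inv_nonneg.2 hR2.le), Real.inv_rpow hR2.le, ← Real.rpow_neg hR2.le]
  calc R2 ^ (-((n : ℝ) - 2 * s) / 2) * (1 - (1 + t) ^ ((2 * s - (n:ℝ)) / 2))
      ≤ R2 ^ (-((n : ℝ) - 2 * s) / 2) * ((2 * ((n:ℝ) - 2 * s) * lastCoord y * lastCoord ξ) ^ θ * R2 ^ (-θ)) := by
        apply mul_le_mul_of_nonneg_left (le_trans (le_trans h2 h3) h5) (Real.rpow_nonneg hR2.le _)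
    _ = (2 * ((n:ℝ) - 2 * s) * lastCoord y * lastCoord ξ) ^ θ * R2 ^ (-((n : ℝ) - 2 * s) / 2 - θ) := by
        rw [show -((n:ℝ) - 2*s)/2 - θ = (-((n:ℝ) - 2*s)/2) + (-θ) by ring, Real.rpow_add hR2]
        ring

lemma GKer_le_one_mul (hns : 2 * s < (n : ℝ)) (hy : 0 ≤ lastCoord y) (hξ : 0 ≤ lastCoord ξ)
    (hR2 : 0 < ‖y - ξ‖ ^ 2 + z ^ 2) :
    GKer n s y z ξ ≤ (‖y - ξ‖ ^ 2 + z ^ 2) ^ (-((n : ℝ) - 2 * s) / 2) := by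
  unfold GKer
  set R2 := ‖y - ξ‖ ^ 2 + z ^ 2 with hR2def
  set t := 4 * lastCoord y * lastCoord ξ / R2 with htdef
  have ht : 0 ≤ t := by positivity
  have h1 : (1 + t) ^ ((2 * s - (n:ℝ)) / 2) = (1 + t) ^ (-(((n:ℝ) - 2 * s) / 2)) := by
    congr 1; ring
  have := one_sub_rpow_le_one (a := ((n:ℝ) - 2 * s) / 2) ht
  rw [← h1] at this
  calc R2 ^ (-((n : ℝ) - 2 * s) / 2) * (1 - (1 + t) ^ ((2 * s - (n:ℝ)) / 2))
      ≤ R2 ^ (-((n : ℝ) - 2 * s) / 2) * 1 :=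
        mul_le_mul_of_nonneg_left this (Real.rpow_nonneg hR2.le _)
    _ = _ := mul_one _

end gker

lemma two_sing {a b u v : ℝ} (ha : 0 < a) (hb : 0 ≤ b) (hu : 0 ≤ u) (hv : 0 ≤ v) :
    u ^ (-a) * v ^ (-b) ≤ u ^ (-(a+b)) + v ^ (-(a+b)) := by
  have hab : 0 < a + b := by linarith
  rcases eq_or_lt_of_le hu with h0 | h0
  · rw [← h0, Real.zero_rpow (neg_ne_zero.2 ha.ne')]
    simp only [zero_mul]
    positivity
  rcases eq_or_lt_of_le hv with h1 | h1
  · rcases eq_or_lt_of_le hb with hb0 | hb0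
    · rw [← h1, ← hb0]
      have e1 : (0:ℝ) ^ (-(0:ℝ)) = 1 := by norm_num
      have e2 : (0:ℝ) ^ (-(a+0)) = 0 := Real.zero_rpow (neg_ne_zero.2 (by simpa using ha.ne'))
      rw [e1, e2, mul_one, add_zero, add_zero]
    · rw [← h1, Real.zero_rpow (neg_ne_zero.2 hb0.ne')]
      simp only [mul_zero]
      positivity
  · rcases le_total u v with h | h
    · have hm : v ^ (-b) ≤ u ^ (-b) := Real.rpow_le_rpow_of_nonpos h0 h (neg_nonpos.2 hb)
      calc u^(-a)*v^(-b) ≤ u^(-a)*u^(-b) :=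
            mul_le_mul_of_nonneg_left hm (Real.rpow_nonneg hu _)
        _ = u^(-(a+b)) := by rw [← Real.rpow_add h0]; congr 1; ring
        _ ≤ _ := le_add_of_nonneg_right (Real.rpow_nonneg hv _)
    · have hm : u ^ (-a) ≤ v ^ (-a) := Real.rpow_le_rpow_of_nonpos h1 h (neg_nonpos.2 ha.le)
      calc u^(-a)*v^(-b) ≤ v^(-a)*v^(-b) :=
            mul_le_mul_of_nonneg_right hm (Real.rpow_nonneg hv _)
        _ = v^(-(a+b)) := by rw [← Real.rpow_add h1]; congr 1; ring
        _ ≤ _ := le_add_of_nonneg_left (Real.rpow_nonneg hu _)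

lemma sq_rpow {x : ℝ} (hx : 0 ≤ x) (e : ℝ) : (x^2) ^ e = x ^ (2*e) := by
  rw [← Real.rpow_natCast x 2, ← Real.rpow_mul hx]
  norm_num

lemma rpow_merge {x : ℝ} (hx : 0 < x) {e f g : ℝ} (h : e + f = g) : x^e * x^f = x^g := by
  rw [← Real.rpow_add hx, h]

lemma half_rpow {x : ℝ} (hx : 0 ≤ x) (e : ℝ) : (x/2)^e = x^e * (2:ℝ)^(-e) := by
  rw [Real.div_rpow hx (by norm_num), Real.rpow_neg (by norm_num), div_eq_mul_inv]

set_option maxHeartbeats 4000000 in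
theorem stmt11 (n : ℕ) (hn : 2 ≤ n) (s σ : ℝ) (hσ : 0 < σ) (hσs : σ < s) (hs : s < 1)
    (M K c p : ℝ) (hM : 0 < M) (hK : 0 < K) (hc : 0 < c) (hp : p ∈ Ico (0 : ℝ) 1)
    (Φ : EuclideanSpace ℝ (Fin n) → ℝ) (hmeas : Measurable Φ) (hΦ0 : ∀ y, 0 ≤ Φ y)
    (hbound₁ : ∀ᵐ y : EuclideanSpace ℝ (Fin n), y ∈ halfSpace n →
      Φ y ≤ M * (1 + ‖y‖) ^ (2 * s - (n : ℝ)))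
    (hbound₂ : ∀ᵐ y : EuclideanSpace ℝ (Fin n), y ∈ halfSpace n →
      Φ y ≤ K * lastCoord y ^ p) :
    ∃ C > (0 : ℝ), ∀ y : EuclideanSpace ℝ (Fin n), y ∈ halfSpace n → ∀ z : ℝ, 0 ≤ z →
      ‖y‖ ^ 2 + z ^ 2 ≤ 1 →
      WGreen n s σ c Φ y z ≤
        C * lastCoord y ^ min (p + σ * ((n : ℝ) - 2 * s) / ((n : ℝ) - 2 * σ)) 1 := by
  have hn0 : 0 < n := by omega
  have hnR : (2:ℝ) ≤ (n:ℝ) := by exact_mod_cast hn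
  have hs0 : 0 < s := hσ.trans hσs
  have hσ1 : σ < 1 := hσs.trans hs
  have hd : 0 < (n:ℝ) - 2*σ := by linarith
  have hns : 0 < (n:ℝ) - 2*s := by linarith
  have hns2 : 2 * s < (n:ℝ) := by linarith
  have hp0 : 0 ≤ p := hp.1
  have hp1 : p < 1 := hp.2
  obtain ⟨q, hqdef⟩ : ∃ x, x = σ * ((n : ℝ) - 2 * s) / ((n : ℝ) - 2 * σ) := ⟨_, rfl⟩
  rw [show σ * ((n : ℝ) - 2 * s) / ((n : ℝ) - 2 * σ) = q from hqdef.symm]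
  obtain ⟨e2, he2def⟩ : ∃ x, x = 2 * (n:ℝ) / ((n:ℝ) - 2 * σ) - 1 := ⟨_, rfl⟩
  have hq0 : 0 < q := by rw [hqdef]; exact div_pos (mul_pos hσ hns) hd
  have hqσ : q < σ := by
    rw [hqdef, div_lt_iff₀ hd]
    have hZ : 0 < σ * (s - σ) := mul_pos hσ (by linarith)
    linarith only [hZ]
  have hqs : q < s := hqσ.trans hσs
  have he21 : 1 ≤ e2 := by
    rw [he2def, le_sub_iff_add_le]
    rw [le_div_iff₀ hd]
    linarith only [hσ]
  have he2nn : 0 ≤ e2 := by linarith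
  have hpe2 : p ≤ p * e2 := le_mul_of_one_le_right hp0 he21
  have hpe2nn : 0 ≤ p * e2 := by linarith
  obtain ⟨α, hαdef⟩ : ∃ x, x = min (p + q) 1 := ⟨_, rfl⟩
  rw [show min (p + q) 1 = α from hαdef.symm]
  have hα0 : 0 < α := by rw [hαdef]; exact lt_min (by linarith) one_pos
  have hα1 : α ≤ 1 := by rw [hαdef]; exact min_le_right _ _
  have hαpq : α ≤ p + q := by rw [hαdef]; exact min_le_left _ _
  have hαlt : α < 2*q + p*e2 := by
    rcases le_total (p + q) 1 with h | h
    · have : α = p + q := hαdef.trans (min_eq_left h)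
      rw [this]; linarith
    · have : α = 1 := hαdef.trans (min_eq_right h)
      rw [this]; linarith
  obtain ⟨a, hadef⟩ : ∃ x, x = 2*s - 2*q := ⟨_, rfl⟩
  have ha0 : 0 < a := by rw [hadef]; linarith
  obtain ⟨b, hbdef⟩ : ∃ x, x = (n:ℝ) - 2*s + α - p*e2 := ⟨_, rfl⟩
  obtain ⟨bp, hbpdef⟩ : ∃ x, x = max b 0 := ⟨_, rfl⟩
  have hbp0 : 0 ≤ bp := by rw [hbpdef]; exact le_max_right _ _
  have habp0 : 0 < a + bp := by linarith
  have habpn : a + bp < (n:ℝ) := by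
    rcases le_total b 0 with h | h
    · rw [hbpdef, max_eq_right h, add_zero]; linarith
    · rw [hbpdef, max_eq_left h, hbdef, hadef]; linarith
  obtain ⟨A, hAdef⟩ : ∃ x, x = 2*((n:ℝ) - 2*s) := ⟨_, rfl⟩
  have hA0 : 0 < A := by rw [hAdef]; linarith
  obtain ⟨T, hTdef⟩ : ∃ x, x = 2*s - (n:ℝ) - 1 + (2*q - 2*s) + (2*s - (n:ℝ))*e2 := ⟨_, rfl⟩
  have hT : T < -(n:ℝ) := by
    have hqe : q * ((n:ℝ) - 2*σ) = σ * ((n:ℝ) - 2*s) := by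
      rw [hqdef, div_mul_cancel₀ _ hd.ne']
    have he2e : e2 * ((n:ℝ) - 2*σ) = (n:ℝ) + 2*σ := by
      rw [he2def]; field_simp; ring
    have key : (T + (n:ℝ)) * ((n:ℝ) - 2*σ) = 2*s*(n:ℝ) - (n:ℝ) + 2*σ - (n:ℝ)^2 := by
      rw [hTdef]; linear_combination (2:ℝ) * hqe + (2*s - (n:ℝ)) * he2e
    have hnum : 2*s*(n:ℝ) - (n:ℝ) + 2*σ - (n:ℝ)^2 < 0 := by
      have hX : 0 < (1 - s) * (n:ℝ) := mul_pos (by linarith only [hs]) (by linarith only [hnR])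
      have hY : 0 ≤ ((n:ℝ) - 2) * (n:ℝ) :=
        mul_nonneg (by linarith only [hnR]) (by linarith only [hnR])
      nlinarith only [hX, hY, hσ1, hnR]
    have hTn : T + (n:ℝ) < 0 := by
      by_contra h
      push_neg at h
      nlinarith only [mul_nonneg h hd.le, key, hnum]
    linarith only [hTn]
  have he1a : (σ - s) * (2 * (n:ℝ) / ((n:ℝ) - 2 * σ)) = -a := by
    rw [hadef, hqdef, div_eq_mul_inv, div_eq_mul_inv]; linear_combination (-2*s) * mul_inv_cancel₀ hd.ne'
  -- constants
  obtain ⟨c1, hc1def⟩ : ∃ x, x = K ^ e2 * (3/2 : ℝ) ^ (p*e2) * (2:ℝ) ^ (-q) := ⟨_, rfl⟩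
  obtain ⟨c2, hc2def⟩ : ∃ x, x = A ^ α * K ^ e2 * (3:ℝ) ^ (α + p*e2) * ((5:ℝ) ^ (-b/2) + 1) := ⟨_, rfl⟩
  obtain ⟨c3, hc3def⟩ : ∃ x, x = A * M ^ e2 * (2:ℝ) ^ ((n:ℝ) + 2 - 2*s) * (2:ℝ) ^ a := ⟨_, rfl⟩
  have hc1 : 0 < c1 := by rw [hc1def]; positivity
  have hc2 : 0 < c2 := by rw [hc2def]; positivity
  have hc3 : 0 < c3 := by rw [hc3def]; positivity
  -- integrals
  obtain ⟨I1, hI1def⟩ : ∃ x, x = ∫ x in Metric.ball (0 : EuclideanSpace ℝ (Fin n)) 1, ‖x‖ ^ (-((n:ℝ) - q)) := ⟨_, rfl⟩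
  obtain ⟨I2, hI2def⟩ : ∃ x, x = ∫ x in Metric.ball (0 : EuclideanSpace ℝ (Fin n)) 3, ‖x‖ ^ (-(a + bp)) := ⟨_, rfl⟩
  set I2' := ∫ x in Metric.ball (0 : EuclideanSpace ℝ (Fin n)) 2, ‖x‖ ^ (-(a + bp)) with hI2'def
  obtain ⟨I3, hI3def⟩ : ∃ x, x = ∫ x : EuclideanSpace ℝ (Fin n), (1 + ‖x‖) ^ T := ⟨_, rfl⟩
  have hI1nn : 0 ≤ I1 := by
    rw [hI1def]
    exact setIntegral_nonneg measurableSet_ball (fun x _ => Real.rpow_nonneg (norm_nonneg x) _)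
  have hI2nn : 0 ≤ I2 := by
    rw [hI2def]
    exact setIntegral_nonneg measurableSet_ball (fun x _ => Real.rpow_nonneg (norm_nonneg x) _)
  have hI2'nn : 0 ≤ I2' := by
    rw [hI2'def]
    exact setIntegral_nonneg measurableSet_ball (fun x _ => Real.rpow_nonneg (norm_nonneg x) _)
  have hI3nn : 0 ≤ I3 := by
    rw [hI3def]
    exact integral_nonneg (fun x => Real.rpow_nonneg (by positivity) _)
  obtain ⟨B, hBdef⟩ : ∃ x, x = c1*I1 + c2*(I2+I2') + c3*I3 := ⟨_, rfl⟩
  have hB : 0 ≤ B := by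
    rw [hBdef]
    have := mul_nonneg hc1.le hI1nn
    have := mul_nonneg hc2.le (by linarith : (0:ℝ) ≤ I2 + I2')
    have := mul_nonneg hc3.le hI3nn
    linarith
  have hCpos : 0 < c * B + 1 := by
    have := mul_nonneg hc.le hB
    linarith only [this]
  -- key integrability facts
  have hInq0 : (0:ℝ) < (n:ℝ) - q := by linarith
  have hInqn : (n:ℝ) - q < (n:ℝ) := by linarith
  have hi1 : IntegrableOn (fun x : EuclideanSpace ℝ (Fin n) => ‖x‖ ^ (-((n:ℝ) - q)))
      (Metric.ball 0 1) := integrableOn_ball_rpow_neg hn0 hInq0 hInqn 1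
  have hi3 : IntegrableOn (fun x : EuclideanSpace ℝ (Fin n) => ‖x‖ ^ (-(a+bp)))
      (Metric.ball 0 3) := integrableOn_ball_rpow_neg hn0 habp0 habpn 3
  have hgauss : Integrable (fun x : EuclideanSpace ℝ (Fin n) => (1 + ‖x‖) ^ T) := by
    have h := integrable_one_add_norm (E := EuclideanSpace ℝ (Fin n)) (μ := volume) (r := -T)
      (by rw [finrank_euclideanSpace_fin]; linarith)
    simpa using h
  refine ⟨c * B + 1, hCpos, ?_⟩
  intro y hy z hz hball
  obtain ⟨yn, hyndef⟩ : ∃ x, x = lastCoord y := ⟨_, rfl⟩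
  rw [show lastCoord y = yn from hyndef.symm]
  have hyn0 : 0 < yn := by rw [hyndef]; exact hy
  have hnorm_y : ‖y‖ ≤ 1 := by nlinarith only [hball, norm_nonneg y, sq_nonneg z]
  have hyn1 : yn ≤ 1 := by
    have h1 := abs_lastCoord_le_norm hn0 y
    have h2 := le_abs_self (lastCoord y)
    rw [← hyndef] at h1 h2
    linarith
  have hz1 : z^2 ≤ 1 := by nlinarith only [hball, sq_nonneg ‖y‖]
  have hynα : 0 < yn ^ α := Real.rpow_pos_of_pos hyn0 _
  -- the three majorant pieces
  obtain ⟨g1, hg1def⟩ : ∃ x, x = (Metric.ball y 1).indicator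
    (fun ξ : EuclideanSpace ℝ (Fin n) => c1 * yn ^ α * ‖ξ - y‖ ^ (-((n:ℝ) - q))) := ⟨_, rfl⟩
  obtain ⟨g2, hg2def⟩ : ∃ x, x = (Metric.ball y 2).indicator
    (fun ξ : EuclideanSpace ℝ (Fin n) => c2 * yn ^ α * (‖ξ‖ ^ (-a) * ‖ξ - y‖ ^ (-bp))) := ⟨_, rfl⟩
  obtain ⟨g3, hg3def⟩ : ∃ x, x = (fun ξ : EuclideanSpace ℝ (Fin n) => c3 * yn ^ α * (1 + ‖ξ‖) ^ T) := ⟨_, rfl⟩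
  have hg1nn : ∀ ξ, 0 ≤ g1 ξ := by
    intro ξ
    rw [hg1def]
    apply indicator_nonneg
    intro x _
    positivity
  have hg2nn : ∀ ξ, 0 ≤ g2 ξ := by
    intro ξ
    rw [hg2def]
    apply indicator_nonneg
    intro x _
    positivity
  have hg3nn : ∀ ξ, 0 ≤ g3 ξ := by
    intro ξ
    rw [hg3def]
    positivity
  have hg1i : Integrable g1 := by
    rw [hg1def]
    refine IntegrableOn.integrable_indicator ?_ measurableSet_ball
    exact (integrableOn_sub_rpow_neg hn0 hInq0 hInqn 1 y).const_mul _
  have hball23 : Metric.ball y 2 ⊆ Metric.ball (0 : EuclideanSpace ℝ (Fin n)) 3 := by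
    apply Metric.ball_subset_ball'
    rw [dist_zero_right]  -- dist y 0
    linarith
  have hi3' : IntegrableOn (fun x : EuclideanSpace ℝ (Fin n) => ‖x‖ ^ (-(a+bp)))
      (Metric.ball y 2) := hi3.mono_set hball23
  have hi4 : IntegrableOn (fun ξ : EuclideanSpace ℝ (Fin n) => ‖ξ - y‖ ^ (-(a+bp)))
      (Metric.ball y 2) := integrableOn_sub_rpow_neg hn0 habp0 habpn 2 y
  have hprod_le : ∀ ξ : EuclideanSpace ℝ (Fin n),
      ‖ξ‖ ^ (-a) * ‖ξ - y‖ ^ (-bp) ≤ ‖ξ‖ ^ (-(a+bp)) + ‖ξ - y‖ ^ (-(a+bp)) :=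
    fun ξ => two_sing ha0 hbp0 (norm_nonneg _) (norm_nonneg _)
  have hmeasprod : Measurable (fun ξ : EuclideanSpace ℝ (Fin n) =>
      ‖ξ‖ ^ (-a) * ‖ξ - y‖ ^ (-bp)) := by fun_prop
  have hiprod : IntegrableOn (fun ξ : EuclideanSpace ℝ (Fin n) =>
      ‖ξ‖ ^ (-a) * ‖ξ - y‖ ^ (-bp)) (Metric.ball y 2) := by
    refine Integrable.mono' (hi3'.add hi4) hmeasprod.aestronglyMeasurable ?_
    refine ae_of_all _ fun ξ => ?_
    rw [Real.norm_eq_abs, abs_of_nonneg (by positivity)]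
    exact hprod_le ξ
  have hg2i : Integrable g2 := by
    rw [hg2def]
    refine IntegrableOn.integrable_indicator ?_ measurableSet_ball
    exact hiprod.const_mul _
  have hg3i : Integrable g3 := by
    rw [hg3def]
    exact (hgauss.const_mul _)
  have hgsum : Integrable (fun ξ => g1 ξ + g2 ξ + g3 ξ) := (hg1i.add hg2i).add hg3i
  -- a.e. facts on restricted measure
  have hae1 : ∀ᵐ ξ ∂(volume.restrict (halfSpace n)),
      Φ ξ ≤ M * (1 + ‖ξ‖) ^ (2*s - (n:ℝ)) := by
    filter_upwards [ae_restrict_of_ae hbound₁, ae_restrict_mem measurableSet_halfSpace]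
      with ξ h1 h2
    exact h1 h2
  have hae2 : ∀ᵐ ξ ∂(volume.restrict (halfSpace n)), Φ ξ ≤ K * lastCoord ξ ^ p := by
    filter_upwards [ae_restrict_of_ae hbound₂, ae_restrict_mem measurableSet_halfSpace]
      with ξ h1 h2
    exact h1 h2
  have haeH : ∀ᵐ ξ ∂(volume.restrict (halfSpace n)), ξ ∈ halfSpace n :=
    ae_restrict_mem measurableSet_halfSpace
  have hsing : volume ({y} : Set (EuclideanSpace ℝ (Fin n))) = 0 := by
    rw [← Metric.closedBall_zero (x := y), Measure.addHaar_closedBall _ _ le_rfl]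
    rw [zero_pow (by rw [finrank_euclideanSpace_fin]; omega)]
    simp
  have haene : ∀ᵐ ξ ∂(volume.restrict (halfSpace n)), ξ ≠ y := by
    apply ae_restrict_of_ae
    rw [ae_iff]
    convert hsing using 2
    ext x
    simp
  -- pointwise bound
  have hpt : ∀ᵐ ξ ∂(volume.restrict (halfSpace n)),
      GKer n s y z ξ * ‖ξ‖ ^ (-a) * Φ ξ ^ e2 ≤ g1 ξ + g2 ξ + g3 ξ := by
    filter_upwards [hae1, hae2, haeH, haene] with ξ hΦ1 hΦ2 hξH hne
    have hξn : 0 < lastCoord ξ := hξH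
    have hξnorm : lastCoord ξ ≤ ‖ξ‖ := (le_abs_self _).trans (abs_lastCoord_le_norm hn0 ξ)
    have hyC : 0 < lastCoord y := by rw [← hyndef]; exact hyn0
    have hyn2 : (0:ℝ) < yn/2 := by linarith only [hyn0]
    have hvpos : 0 < ‖y - ξ‖ := by
      rw [norm_pos_iff]
      exact sub_ne_zero.2 (Ne.symm hne)
    obtain ⟨R2, hR2def⟩ : ∃ x, x = ‖y - ξ‖^2 + z^2 := ⟨_, rfl⟩
    have hR2pos : 0 < R2 := by
      rw [hR2def]
      nlinarith only [pow_pos hvpos 2, sq_nonneg z]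
    have hv2 : ‖y - ξ‖^2 ≤ R2 := by
      rw [hR2def]
      nlinarith only [sq_nonneg z]
    have hdist : |lastCoord ξ - yn| ≤ ‖y - ξ‖ := by
      rw [hyndef, abs_sub_comm, ← lastCoord_sub hn0]
      exact abs_lastCoord_le_norm hn0 _
    have hvsqrt : ‖y - ξ‖ ≤ Real.sqrt R2 := by
      have h1 := Real.sqrt_le_sqrt hv2
      rwa [Real.sqrt_sq (norm_nonneg _)] at h1
    have hΦnn := hΦ0 ξ
    have hgk0 : 0 ≤ GKer n s y z ξ := GKer_nonneg hns2 hyC.le hξn.le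
    have hxa0 : (0:ℝ) ≤ ‖ξ‖ ^ (-a) := Real.rpow_nonneg (norm_nonneg _) _
    have hφnn : (0:ℝ) ≤ Φ ξ ^ e2 := Real.rpow_nonneg hΦnn _
    rcases le_or_gt R2 ((yn/2)^2) with hcase | hcase
    · -- NEAR REGION
      have hGKone : GKer n s y z ξ ≤ R2 ^ (-((n:ℝ) - 2*s)/2) := by
        have h := GKer_le_one_mul hns2 hyC.le hξn.le (hR2def ▸ hR2pos)
        rwa [← hR2def] at h
      have hvle : ‖y - ξ‖ ≤ yn/2 := by
        have h1 := Real.sqrt_le_sqrt hcase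
        rw [Real.sqrt_sq hyn2.le] at h1
        linarith only [hvsqrt, h1]
      have habs := abs_le.1 (le_trans hdist hvle)
      have hξlow : yn/2 ≤ lastCoord ξ := by linarith only [habs]
      have hξhigh : lastCoord ξ ≤ 3/2*yn := by linarith only [habs]
      have hmem : ξ ∈ Metric.ball y 1 := by
        rw [Metric.mem_ball, dist_eq_norm, norm_sub_rev ξ y]
        linarith only [hvle, hyn1]
      have hP2 : ‖ξ‖ ^ (-a) ≤ (yn/2) ^ (-a) :=
        Real.rpow_le_rpow_of_nonpos hyn2 (by linarith only [hξlow, hξnorm])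
          (by linarith only [ha0])
      have hP3 : Φ ξ ^ e2 ≤ K^e2 * (3/2:ℝ)^(p*e2) * yn^(p*e2) := by
        have h1 : Φ ξ ^ e2 ≤ (K * lastCoord ξ ^ p) ^ e2 := Real.rpow_le_rpow hΦnn hΦ2 he2nn
        rw [Real.mul_rpow hK.le (Real.rpow_nonneg hξn.le _), ← Real.rpow_mul hξn.le] at h1
        have h3 : (lastCoord ξ)^(p*e2) ≤ (3/2*yn)^(p*e2) :=
          Real.rpow_le_rpow hξn.le (by linarith only [hξhigh]) hpe2nn
        have h4 : (3/2*yn : ℝ)^(p*e2) = (3/2:ℝ)^(p*e2) * yn^(p*e2) :=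
          Real.mul_rpow (by norm_num) hyn0.le
        calc Φ ξ ^ e2 ≤ K^e2 * (lastCoord ξ)^(p*e2) := h1
          _ ≤ K^e2 * ((3/2:ℝ)^(p*e2) * yn^(p*e2)) := by
              refine mul_le_mul_of_nonneg_left ?_ (Real.rpow_nonneg hK.le _)
              rw [← h4]
              exact h3
          _ = K^e2 * (3/2:ℝ)^(p*e2) * yn^(p*e2) := by ring
      have hP5 : R2 ^ ((2*s-q)/2) ≤ (yn/2)^(2*s-q) := by
        have h1 : R2 ^ ((2*s-q)/2) ≤ ((yn/2)^2) ^ ((2*s-q)/2) :=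
          Real.rpow_le_rpow hR2pos.le hcase (by linarith only [hqs, hs0])
        rwa [sq_rpow hyn2.le ((2*s-q)/2), (by ring : 2*((2*s-q)/2) = 2*s-q)] at h1
      have hP6 : R2 ^ ((q-(n:ℝ))/2) ≤ ‖ξ - y‖ ^ (-((n:ℝ)-q)) := by
        have h1 : R2 ^ ((q-(n:ℝ))/2) ≤ (‖y-ξ‖^2) ^ ((q-(n:ℝ))/2) :=
          Real.rpow_le_rpow_of_nonpos (pow_pos hvpos 2) hv2
            (by nlinarith only [hq0, hqs, hs, hnR])
        rwa [sq_rpow (norm_nonneg _) _, (by ring : 2*((q-(n:ℝ))/2) = -((n:ℝ)-q)),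
          norm_sub_rev y ξ] at h1
      have hGK2 : GKer n s y z ξ ≤ (yn/2)^(2*s-q) * ‖ξ - y‖ ^ (-((n:ℝ)-q)) := by
        refine le_trans hGKone ?_
        rw [(rpow_merge hR2pos (by ring : (2*s-q)/2 + (q-(n:ℝ))/2 = -((n:ℝ)-2*s)/2)).symm]
        exact mul_le_mul hP5 hP6 (Real.rpow_nonneg hR2pos.le _)
          (Real.rpow_nonneg hyn2.le _)
      have hY1nn : (0:ℝ) ≤ (yn/2)^(2*s-q) * ‖ξ - y‖ ^ (-((n:ℝ)-q)) :=
        mul_nonneg (Real.rpow_nonneg hyn2.le _) (Real.rpow_nonneg (norm_nonneg _) _)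
      have hstep : GKer n s y z ξ * ‖ξ‖ ^ (-a) * Φ ξ ^ e2 ≤
          ((yn/2)^(2*s-q) * ‖ξ - y‖ ^ (-((n:ℝ)-q))) * (yn/2)^(-a) *
            (K^e2 * (3/2:ℝ)^(p*e2) * yn^(p*e2)) :=
        mul_le_mul (mul_le_mul hGK2 hP2 hxa0 hY1nn) hP3 hφnn
          (mul_nonneg hY1nn (Real.rpow_nonneg hyn2.le _))
      have hkey : ((yn/2)^(2*s-q) * ‖ξ - y‖ ^ (-((n:ℝ)-q))) * (yn/2)^(-a) *
          (K^e2 * (3/2:ℝ)^(p*e2) * yn^(p*e2)) ≤ c1 * yn^α * ‖ξ - y‖ ^ (-((n:ℝ)-q)) := by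
        have hA1 : (yn/2)^(2*s-q) * (yn/2)^(-a) = yn^q * (2:ℝ)^(-q) := by
          rw [rpow_merge hyn2 (show (2*s-q) + (-a) = q by rw [hadef]; ring), half_rpow hyn0.le q]
        have hA2 : yn^(p*e2) * yn^q = yn^(p*e2+q) := rpow_merge hyn0 rfl
        have e_le : yn^(p*e2+q) ≤ yn^α :=
          Real.rpow_le_rpow_of_exponent_ge hyn0 hyn1 (by linarith only [hαpq, hpe2])
        calc ((yn/2)^(2*s-q) * ‖ξ - y‖ ^ (-((n:ℝ)-q))) * (yn/2)^(-a) *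
            (K^e2 * (3/2:ℝ)^(p*e2) * yn^(p*e2))
            = ((yn/2)^(2*s-q) * (yn/2)^(-a)) * (K^e2 * (3/2:ℝ)^(p*e2)) * yn^(p*e2) *
              ‖ξ - y‖ ^ (-((n:ℝ)-q)) := by ring
          _ = (K^e2 * (3/2:ℝ)^(p*e2) * (2:ℝ)^(-q)) * (yn^(p*e2) * yn^q) *
              ‖ξ - y‖ ^ (-((n:ℝ)-q)) := by rw [hA1]; ring
          _ = (K^e2 * (3/2:ℝ)^(p*e2) * (2:ℝ)^(-q)) * yn^(p*e2+q) *
              ‖ξ - y‖ ^ (-((n:ℝ)-q)) := by rw [hA2]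
          _ ≤ (K^e2 * (3/2:ℝ)^(p*e2) * (2:ℝ)^(-q)) * yn^α * ‖ξ - y‖ ^ (-((n:ℝ)-q)) := by
              refine mul_le_mul_of_nonneg_right (mul_le_mul_of_nonneg_left e_le (by positivity))
                (Real.rpow_nonneg (norm_nonneg _) _)
          _ = c1 * yn^α * ‖ξ - y‖ ^ (-((n:ℝ)-q)) := by rw [hc1def]
      have hg1v : g1 ξ = c1 * yn^α * ‖ξ - y‖ ^ (-((n:ℝ)-q)) := by
        rw [hg1def, indicator_of_mem hmem]
      linarith only [hstep, hkey, hg1v, hg2nn ξ, hg3nn ξ]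
    rcases lt_or_ge ‖y - ξ‖ 2 with hv3 | hv3
    · -- MIDDLE REGION
      have hmem : ξ ∈ Metric.ball y 2 := by
        rw [Metric.mem_ball, dist_eq_norm, norm_sub_rev ξ y]
        linarith only [hv3]
      have hyn2R : yn ≤ 2 * Real.sqrt R2 := by
        have h1 := Real.sqrt_le_sqrt hcase.le
        rw [Real.sqrt_sq hyn2.le] at h1
        linarith only [h1]
      have hξle : lastCoord ξ ≤ 3 * Real.sqrt R2 := by
        have h2 := abs_le.1 hdist
        linarith only [h2, hyn2R, hvsqrt]
      have hGKp := GKer_le_pow hns2 hyC hξn (hR2def ▸ hR2pos) hα0.le hα1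
      rw [← hR2def] at hGKp
      have hAnn : (0:ℝ) ≤ 2*((n:ℝ)-2*s) := by linarith only [hns]
      have hexp : (2*((n:ℝ)-2*s) * lastCoord y * lastCoord ξ)^α
          = A^α * yn^α * (lastCoord ξ)^α := by
        rw [Real.mul_rpow (mul_nonneg hAnn hyC.le) hξn.le,
          Real.mul_rpow hAnn hyC.le, ← hAdef, ← hyndef]
      rw [hexp] at hGKp
      have hP3 : Φ ξ ^ e2 ≤ K^e2 * (lastCoord ξ)^(p*e2) := by
        have h1 : Φ ξ ^ e2 ≤ (K * lastCoord ξ ^ p) ^ e2 := Real.rpow_le_rpow hΦnn hΦ2 he2nn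
        rwa [Real.mul_rpow hK.le (Real.rpow_nonneg hξn.le _), ← Real.rpow_mul hξn.le] at h1
      have hξpow : (lastCoord ξ)^α * (lastCoord ξ)^(p*e2) = (lastCoord ξ)^(α+p*e2) :=
        rpow_merge hξn rfl
      have hξpow2 : (lastCoord ξ)^(α+p*e2) ≤ (3:ℝ)^(α+p*e2) * R2^((α+p*e2)/2) := by
        have h1 : (lastCoord ξ)^(α+p*e2) ≤ (3*Real.sqrt R2)^(α+p*e2) :=
          Real.rpow_le_rpow hξn.le hξle (by linarith only [hα0, hpe2nn])
        rw [Real.mul_rpow (by norm_num) (Real.sqrt_nonneg _)] at h1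
        rwa [Real.sqrt_eq_rpow, ← Real.rpow_mul hR2pos.le,
          (by ring : 1/2*(α+p*e2) = (α+p*e2)/2)] at h1
      have hR2le5 : R2 ≤ 5 := by
        rw [hR2def]
        nlinarith only [hv3, hz1, norm_nonneg (y - ξ)]
      have hcb : R2^(-b/2) ≤ ((5:ℝ)^(-b/2)+1) * ‖ξ - y‖^(-bp) := by
        rcases le_or_gt b 0 with hb0 | hb0
        · have hbp' : bp = 0 := by rw [hbpdef]; exact max_eq_right hb0
          rw [hbp', neg_zero, Real.rpow_zero, mul_one]
          have h1 : R2^(-b/2) ≤ (5:ℝ)^(-b/2) :=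
            Real.rpow_le_rpow hR2pos.le hR2le5 (by linarith only [hb0])
          linarith only [h1]
        · have hbp' : bp = b := by rw [hbpdef]; exact max_eq_left hb0.le
          rw [hbp']
          have h1 : R2^(-b/2) ≤ (‖y-ξ‖^2)^(-b/2) :=
            Real.rpow_le_rpow_of_nonpos (pow_pos hvpos 2) hv2 (by linarith only [hb0])
          rw [sq_rpow (norm_nonneg _) _, (by ring : 2*(-b/2) = -b), norm_sub_rev y ξ] at h1
          have h2 : (0:ℝ) ≤ ‖ξ-y‖^(-b) := Real.rpow_nonneg (norm_nonneg _) _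
          have h3 : (0:ℝ) ≤ (5:ℝ)^(-b/2) := Real.rpow_nonneg (by norm_num) _
          nlinarith only [h1, h2, h3]
      have hY1nn : (0:ℝ) ≤ A^α * yn^α * (lastCoord ξ)^α * R2^(-((n:ℝ)-2*s)/2 - α) :=
        mul_nonneg (mul_nonneg (mul_nonneg (Real.rpow_nonneg hA0.le _)
          (Real.rpow_nonneg hyn0.le _)) (Real.rpow_nonneg hξn.le _))
          (Real.rpow_nonneg hR2pos.le _)
      have hstep : GKer n s y z ξ * ‖ξ‖ ^ (-a) * Φ ξ ^ e2 ≤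
          (A^α * yn^α * (lastCoord ξ)^α * R2^(-((n:ℝ)-2*s)/2 - α)) * ‖ξ‖ ^ (-a) *
            (K^e2 * (lastCoord ξ)^(p*e2)) :=
        mul_le_mul (mul_le_mul hGKp le_rfl hxa0 hY1nn) hP3 hφnn (mul_nonneg hY1nn hxa0)
      have hCnn : (0:ℝ) ≤ A^α * K^e2 := mul_nonneg (Real.rpow_nonneg hA0.le _)
        (Real.rpow_nonneg hK.le _)
      have hkey : (A^α * yn^α * (lastCoord ξ)^α * R2^(-((n:ℝ)-2*s)/2 - α)) * ‖ξ‖ ^ (-a) *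
          (K^e2 * (lastCoord ξ)^(p*e2)) ≤ c2 * yn^α * (‖ξ‖^(-a) * ‖ξ-y‖^(-bp)) := by
        calc (A^α * yn^α * (lastCoord ξ)^α * R2^(-((n:ℝ)-2*s)/2 - α)) * ‖ξ‖ ^ (-a) *
            (K^e2 * (lastCoord ξ)^(p*e2))
            = (A^α * K^e2 * yn^α) * ((lastCoord ξ)^α * (lastCoord ξ)^(p*e2)) *
              R2^(-((n:ℝ)-2*s)/2 - α) * ‖ξ‖^(-a) := by ring
          _ = (A^α * K^e2 * yn^α) * (lastCoord ξ)^(α+p*e2) *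
              R2^(-((n:ℝ)-2*s)/2 - α) * ‖ξ‖^(-a) := by rw [hξpow]
          _ ≤ (A^α * K^e2 * yn^α) * ((3:ℝ)^(α+p*e2) * R2^((α+p*e2)/2)) *
              R2^(-((n:ℝ)-2*s)/2 - α) * ‖ξ‖^(-a) := by
              refine mul_le_mul_of_nonneg_right (mul_le_mul_of_nonneg_right
                (mul_le_mul_of_nonneg_left hξpow2 ?_) (Real.rpow_nonneg hR2pos.le _)) hxa0
              exact mul_nonneg hCnn (Real.rpow_nonneg hyn0.le _)
          _ = (A^α * K^e2 * (3:ℝ)^(α+p*e2) * yn^α) *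
              (R2^((α+p*e2)/2) * R2^(-((n:ℝ)-2*s)/2 - α)) * ‖ξ‖^(-a) := by ring
          _ = (A^α * K^e2 * (3:ℝ)^(α+p*e2) * yn^α) * R2^(-b/2) * ‖ξ‖^(-a) := by
              rw [rpow_merge hR2pos (show (α+p*e2)/2 + (-((n:ℝ)-2*s)/2 - α) = -b/2 by
                rw [hbdef]; ring)]
          _ ≤ (A^α * K^e2 * (3:ℝ)^(α+p*e2) * yn^α) * (((5:ℝ)^(-b/2)+1) * ‖ξ-y‖^(-bp)) *
              ‖ξ‖^(-a) := by
              refine mul_le_mul_of_nonneg_right (mul_le_mul_of_nonneg_left hcb ?_) hxa0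
              exact mul_nonneg (mul_nonneg hCnn (Real.rpow_nonneg (by norm_num) _))
                (Real.rpow_nonneg hyn0.le _)
          _ = c2 * yn^α * (‖ξ‖^(-a) * ‖ξ-y‖^(-bp)) := by rw [hc2def]; ring
      have hg2v : g2 ξ = c2 * yn^α * (‖ξ‖^(-a) * ‖ξ-y‖^(-bp)) := by
        rw [hg2def, indicator_of_mem hmem]
      linarith only [hstep, hkey, hg2v, hg1nn ξ, hg3nn ξ]
    · -- FAR REGION
      have hX1 : 1 ≤ ‖ξ‖ := by linarith only [norm_sub_le y ξ, hnorm_y, hv3]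
      have h1X : (0:ℝ) < 1 + ‖ξ‖ := by positivity
      have hhalf : (1 + ‖ξ‖)/2 ≤ ‖y - ξ‖ := by
        have h2 := norm_sub_norm_le ξ y
        rw [norm_sub_rev ξ y] at h2
        linarith only [h2, hnorm_y, hv3]
      have hhalfpos : (0:ℝ) < (1+‖ξ‖)/2 := by positivity
      have hR2ge : ((1+‖ξ‖)/2)^2 ≤ R2 := by
        rw [hR2def]
        have h3 : ((1+‖ξ‖)/2)^2 ≤ ‖y-ξ‖^2 := pow_le_pow_left₀ hhalfpos.le hhalf 2
        linarith only [h3, sq_nonneg z]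
      have hGKp := GKer_le_pow hns2 hyC hξn (hR2def ▸ hR2pos) zero_le_one (le_refl 1)
      rw [← hR2def, Real.rpow_one] at hGKp
      rw [show 2*((n:ℝ)-2*s) * lastCoord y = A * yn by rw [hAdef, hyndef]] at hGKp
      have hP1 : R2^(-((n:ℝ)-2*s)/2 - 1) ≤ (1+‖ξ‖)^(2*s-(n:ℝ)-2) * (2:ℝ)^((n:ℝ)+2-2*s) := by
        have h1 : R2^(-((n:ℝ)-2*s)/2-1) ≤ (((1+‖ξ‖)/2)^2)^(-((n:ℝ)-2*s)/2-1) :=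
          Real.rpow_le_rpow_of_nonpos (pow_pos hhalfpos 2) hR2ge (by nlinarith only [hns])
        rw [sq_rpow hhalfpos.le _, (by ring : 2*(-((n:ℝ)-2*s)/2-1) = 2*s-(n:ℝ)-2),
          half_rpow h1X.le _, (by ring : -(2*s-(n:ℝ)-2) = (n:ℝ)+2-2*s)] at h1
        exact h1
      have hP2 : ‖ξ‖^(-a) ≤ (1+‖ξ‖)^(-a) * (2:ℝ)^a := by
        have h1 : ‖ξ‖^(-a) ≤ ((1+‖ξ‖)/2)^(-a) :=
          Real.rpow_le_rpow_of_nonpos hhalfpos (by linarith only [hX1])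
            (by linarith only [ha0])
        rwa [half_rpow h1X.le (-a), neg_neg] at h1
      have hP3 : Φ ξ ^ e2 ≤ M^e2 * (1+‖ξ‖)^((2*s-(n:ℝ))*e2) := by
        have h1 : Φ ξ ^ e2 ≤ (M * (1+‖ξ‖)^(2*s-(n:ℝ)))^e2 := Real.rpow_le_rpow hΦnn hΦ1 he2nn
        rwa [Real.mul_rpow hM.le (Real.rpow_nonneg h1X.le _), ← Real.rpow_mul h1X.le] at h1
      have hξle : lastCoord ξ ≤ 1+‖ξ‖ := by linarith only [hξnorm]
      have hyle : yn ≤ yn^α := by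
        have h1 := Real.rpow_le_rpow_of_exponent_ge hyn0 hyn1 hα1
        rwa [Real.rpow_one] at h1
      have hAy : (0:ℝ) ≤ A * yn := mul_nonneg hA0.le hyn0.le
      have hGK2 : GKer n s y z ξ ≤ (A * yn * (1+‖ξ‖)) *
          ((1+‖ξ‖)^(2*s-(n:ℝ)-2) * (2:ℝ)^((n:ℝ)+2-2*s)) := by
        refine le_trans hGKp ?_
        refine mul_le_mul (mul_le_mul_of_nonneg_left hξle hAy) hP1
          (Real.rpow_nonneg hR2pos.le _) ?_
        exact mul_nonneg hAy (by positivity)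
      have hY1nn : (0:ℝ) ≤ (A * yn * (1+‖ξ‖)) *
          ((1+‖ξ‖)^(2*s-(n:ℝ)-2) * (2:ℝ)^((n:ℝ)+2-2*s)) :=
        mul_nonneg (mul_nonneg hAy h1X.le)
          (mul_nonneg (Real.rpow_nonneg h1X.le _) (Real.rpow_nonneg (by norm_num) _))
      have hstep : GKer n s y z ξ * ‖ξ‖ ^ (-a) * Φ ξ ^ e2 ≤
          ((A * yn * (1+‖ξ‖)) * ((1+‖ξ‖)^(2*s-(n:ℝ)-2) * (2:ℝ)^((n:ℝ)+2-2*s))) *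
            ((1+‖ξ‖)^(-a) * (2:ℝ)^a) * (M^e2 * (1+‖ξ‖)^((2*s-(n:ℝ))*e2)) :=
        mul_le_mul (mul_le_mul hGK2 hP2 hxa0 hY1nn) hP3 hφnn
          (mul_nonneg hY1nn (mul_nonneg (Real.rpow_nonneg h1X.le _)
            (Real.rpow_nonneg (by norm_num) _)))
      have hmergeT : (1+‖ξ‖) * ((1+‖ξ‖)^(2*s-(n:ℝ)-2) * ((1+‖ξ‖)^(-a) *
          (1+‖ξ‖)^((2*s-(n:ℝ))*e2))) = (1+‖ξ‖)^T := by
        rw [rpow_merge h1X (e := -a) (f := (2*s-(n:ℝ))*e2) rfl,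
          rpow_merge h1X (e := 2*s-(n:ℝ)-2) rfl]
        nth_rewrite 1 [← Real.rpow_one (1+‖ξ‖)]
        rw [rpow_merge h1X (e := (1:ℝ)) rfl]
        congr 1
        rw [hTdef, hadef]
        ring
      have hkey : ((A * yn * (1+‖ξ‖)) * ((1+‖ξ‖)^(2*s-(n:ℝ)-2) * (2:ℝ)^((n:ℝ)+2-2*s))) *
          ((1+‖ξ‖)^(-a) * (2:ℝ)^a) * (M^e2 * (1+‖ξ‖)^((2*s-(n:ℝ))*e2)) ≤
          c3 * yn^α * (1+‖ξ‖)^T := by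
        have h0 : ((A * yn * (1+‖ξ‖)) * ((1+‖ξ‖)^(2*s-(n:ℝ)-2) * (2:ℝ)^((n:ℝ)+2-2*s))) *
            ((1+‖ξ‖)^(-a) * (2:ℝ)^a) * (M^e2 * (1+‖ξ‖)^((2*s-(n:ℝ))*e2)) =
            (A * M^e2 * (2:ℝ)^((n:ℝ)+2-2*s) * (2:ℝ)^a) * yn *
            ((1+‖ξ‖) * ((1+‖ξ‖)^(2*s-(n:ℝ)-2) * ((1+‖ξ‖)^(-a) *
              (1+‖ξ‖)^((2*s-(n:ℝ))*e2)))) := by ring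
        rw [h0, hmergeT, ← hc3def]
        refine mul_le_mul_of_nonneg_right (mul_le_mul_of_nonneg_left hyle hc3.le)
          (Real.rpow_nonneg h1X.le _)
      have hg3v : g3 ξ = c3 * yn^α * (1+‖ξ‖)^T := by rw [hg3def]
      linarith only [hstep, hkey, hg3v, hg1nn ξ, hg2nn ξ]
  have hF0 : ∀ᵐ ξ ∂(volume.restrict (halfSpace n)),
      0 ≤ GKer n s y z ξ * ‖ξ‖ ^ (-a) * Φ ξ ^ e2 := by
    filter_upwards [haeH] with ξ hξH
    have h1 : 0 ≤ GKer n s y z ξ := GKer_nonneg hns2 (by rw [← hyndef]; exact hyn0.le) (le_of_lt hξH)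
    have h2 : 0 ≤ ‖ξ‖ ^ (-a) := Real.rpow_nonneg (norm_nonneg _) _
    have h3 : 0 ≤ Φ ξ ^ e2 := Real.rpow_nonneg (hΦ0 ξ) _
    positivity
  -- integral bounds
  have hg1eq : ∫ ξ, g1 ξ = c1 * yn ^ α * I1 := by
    rw [hg1def, integral_indicator measurableSet_ball, integral_const_mul,
      setIntegral_sub_rpow_neg hn0, hI1def]
  have hg3eq : ∫ ξ, g3 ξ = c3 * yn ^ α * I3 := by
    rw [hg3def, integral_const_mul, hI3def]
  have hg2le : ∫ ξ, g2 ξ ≤ c2 * yn ^ α * (I2 + I2') := by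
    rw [hg2def, integral_indicator measurableSet_ball, integral_const_mul]
    refine mul_le_mul_of_nonneg_left ?_ (by positivity)
    calc ∫ ξ in Metric.ball y 2, ‖ξ‖ ^ (-a) * ‖ξ - y‖ ^ (-bp)
        ≤ ∫ ξ in Metric.ball y 2, (‖ξ‖ ^ (-(a+bp)) + ‖ξ - y‖ ^ (-(a+bp))) := by
          refine setIntegral_mono_on hiprod (hi3'.add hi4) measurableSet_ball
            (fun ξ _ => hprod_le ξ)
      _ = (∫ ξ in Metric.ball y 2, ‖ξ‖ ^ (-(a+bp)))
            + ∫ ξ in Metric.ball y 2, ‖ξ - y‖ ^ (-(a+bp)) := integral_add hi3' hi4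
      _ ≤ I2 + I2' := by
          refine add_le_add ?_ ?_
          · rw [hI2def]
            refine setIntegral_mono_set hi3 ?_ (HasSubset.Subset.eventuallyLE hball23)
            exact ae_of_all _ (fun ξ => Real.rpow_nonneg (norm_nonneg _) _)
          · rw [setIntegral_sub_rpow_neg hn0, hI2'def]
  -- main chain
  have hmain : (∫ ξ in halfSpace n,
      GKer n s y z ξ * ‖ξ‖ ^ (-a) * Φ ξ ^ e2) ≤ B * yn ^ α := by
    calc ∫ ξ in halfSpace n, GKer n s y z ξ * ‖ξ‖ ^ (-a) * Φ ξ ^ e2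
        ≤ ∫ ξ in halfSpace n, (g1 ξ + g2 ξ + g3 ξ) :=
          integral_mono_of_nonneg hF0 (hgsum.restrict) hpt
      _ ≤ ∫ ξ, (g1 ξ + g2 ξ + g3 ξ) := by
          refine setIntegral_le_integral hgsum ?_
          exact ae_of_all _ (fun ξ =>
            add_nonneg (add_nonneg (hg1nn ξ) (hg2nn ξ)) (hg3nn ξ))
      _ = (∫ ξ, g1 ξ) + (∫ ξ, g2 ξ) + ∫ ξ, g3 ξ :=
          (integral_add ((hg1i.add hg2i) : Integrable (fun ξ => g1 ξ + g2 ξ)) hg3i).trans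
            (by rw [integral_add hg1i hg2i])
      _ ≤ c1 * yn ^ α * I1 + c2 * yn ^ α * (I2 + I2') + c3 * yn ^ α * I3 := by
          rw [hg1eq, hg3eq]
          exact add_le_add (add_le_add le_rfl hg2le) le_rfl
      _ = B * yn ^ α := by rw [hBdef]; ring
  have hWeq : WGreen n s σ c Φ y z = c * ∫ ξ in halfSpace n,
      GKer n s y z ξ * ‖ξ‖ ^ (-a) * Φ ξ ^ e2 := by
    rw [WGreen]
    congr 1
    refine setIntegral_congr_fun measurableSet_halfSpace (fun ξ _ => ?_)
    rw [he1a, ← he2def]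
  rw [hWeq]
  calc c * ∫ ξ in halfSpace n, GKer n s y z ξ * ‖ξ‖ ^ (-a) * Φ ξ ^ e2
      ≤ c * (B * yn ^ α) := mul_le_mul_of_nonneg_left hmain hc.le
    _ ≤ (c * B + 1) * yn ^ α := by nlinarith only [hynα, hc, hB, mul_nonneg hc.le hB]
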